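/- For every r ≥ 0, σ > 0, K > 0 and T > 0, the Black–Scholes price function η(t,s) = s Φ(d₁(t,s)) − K e^{−r(T−t)} Φ(d₂(t,s)) satisfies the Black–Scholes partial differential equation ∂η/∂t (t,s) + r s ∂η/∂s (t,s) + ½ σ² s² ∂²η/∂s² (t,s) = r η(t,s) at every point (t,s) with 0 < t < T and s > 0. -/

import Mathlib

open MeasureTheory Real

/-- Standard normal cumulative distribution function. -/
noncomputable def stdNormalCDF (x : ℝ) : ℝ :=
  ∫ u in Set.Iic x, Real.exp (-u ^ 2 / 2) / Real.sqrt (2 * Real.pi)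

/-- Black–Scholes price of a European call with rate `r`, volatility `σ`,
strike `K`, maturity `T`, evaluated at time `t` and stock price `s`;
with `η(t,0)=0` and `η(T,s)=(s-K)⁺`. -/
noncomputable def bsPrice (r σ K T t s : ℝ) : ℝ :=
  if s ≤ 0 then 0
  else if t < T then
    s * stdNormalCDF ((Real.log (s / K) + (r + σ ^ 2 / 2) * (T - t)) / (σ * Real.sqrt (T - t)))
      - K * Real.exp (-r * (T - t)) *
        stdNormalCDF ((Real.log (s / K) + (r + σ ^ 2 / 2) * (T - t)) / (σ * Real.sqrt (T - t))
          - σ * Real.sqrt (T - t))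
  else max (s - K) 0

lemma stdNormal_integrable :
    Integrable (fun u : ℝ => Real.exp (-u ^ 2 / 2) / Real.sqrt (2 * Real.pi)) := by
  have h : Integrable (fun u : ℝ => Real.exp (-(1/2) * u ^ 2)) :=
    integrable_exp_neg_mul_sq (by norm_num)
  have h2 := h.div_const (Real.sqrt (2 * Real.pi))
  convert h2 using 2 with u
  ring_nf

lemma hasDerivAt_stdNormalCDF (x : ℝ) :
    HasDerivAt stdNormalCDF (Real.exp (-x ^ 2 / 2) / Real.sqrt (2 * Real.pi)) x := by
  set f : ℝ → ℝ := fun u => Real.exp (-u ^ 2 / 2) / Real.sqrt (2 * Real.pi) with hf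
  have hcont : Continuous f := by fun_prop
  have hint := stdNormal_integrable
  have heq : stdNormalCDF = fun y => stdNormalCDF 0 + ∫ u in (0:ℝ)..y, f u := by
    funext y
    have := intervalIntegral.integral_Iic_sub_Iic (μ := volume) (f := f)
      hint.integrableOn hint.integrableOn (a := 0) (b := y)
    unfold stdNormalCDF
    rw [← this]; ring
  have hd : HasDerivAt (fun y => ∫ u in (0:ℝ)..y, f u) (f x) x :=
    intervalIntegral.integral_hasDerivAt_right hint.intervalIntegrable
      hcont.aestronglyMeasurable.stronglyMeasurableAtFilter hcont.continuousAt
  rw [heq]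
  exact hd.const_add _

lemma bs_key (r σ K τ w : ℝ) (hσ : 0 < σ) (hK : 0 < K) (hτ : 0 < τ) (hw : 0 < w) :
    w * (Real.exp (-((Real.log (w / K) + (r + σ ^ 2 / 2) * τ) / (σ * Real.sqrt τ)) ^ 2 / 2) /
        Real.sqrt (2 * Real.pi))
      = K * Real.exp (-r * τ) *
        (Real.exp (-((Real.log (w / K) + (r + σ ^ 2 / 2) * τ) / (σ * Real.sqrt τ)
            - σ * Real.sqrt τ) ^ 2 / 2) / Real.sqrt (2 * Real.pi)) := by
  set q := Real.sqrt τ with hqdef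
  have hq0 : 0 < q := Real.sqrt_pos.mpr hτ
  have hq2 : q ^ 2 = τ := Real.sq_sqrt hτ.le
  set X := (Real.log (w / K) + (r + σ ^ 2 / 2) * τ) / (σ * q) with hX
  have hXa : X * (σ * q) = Real.log w - Real.log K + (r + σ ^ 2 / 2) * τ := by
    rw [hX, div_mul_cancel₀ _ (by positivity : σ * q ≠ 0), Real.log_div hw.ne' hK.ne']
  have h : w * Real.exp (-X ^ 2 / 2)
      = K * Real.exp (-r * τ) * Real.exp (-(X - σ * q) ^ 2 / 2) := by
    rw [← Real.exp_log hw, ← Real.exp_log hK, ← Real.exp_add, ← Real.exp_add, ← Real.exp_add,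
      Real.exp_eq_exp]
    linear_combination (-1 : ℝ) * hXa + σ ^ 2 / 2 * hq2
  rw [mul_div_assoc', mul_div_assoc', h]

lemma hasDerivAt_bs_d1 (r σ K τ : ℝ) (hσ : 0 < σ) (hK : 0 < K) (hτ : 0 < τ) (w : ℝ)
    (hw : 0 < w) :
    HasDerivAt (fun x => (Real.log (x / K) + (r + σ ^ 2 / 2) * τ) / (σ * Real.sqrt τ))
      (1 / (w * (σ * Real.sqrt τ))) w := by
  have hq0 : 0 < Real.sqrt τ := Real.sqrt_pos.mpr hτ
  have h1 : HasDerivAt (fun x : ℝ => x / K) (1 / K) w := (hasDerivAt_id w).div_const K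
  have h2 := ((h1.log (by positivity)).add_const ((r + σ ^ 2 / 2) * τ)).div_const
    (σ * Real.sqrt τ)
  refine h2.congr_deriv (Eq.symm ?_)
  field_simp

lemma hasDerivAt_bs_space (r σ K τ : ℝ) (hσ : 0 < σ) (hK : 0 < K) (hτ : 0 < τ) (w : ℝ)
    (hw : 0 < w) :
    HasDerivAt (fun x => x * stdNormalCDF ((Real.log (x / K) + (r + σ ^ 2 / 2) * τ) /
          (σ * Real.sqrt τ))
        - K * Real.exp (-r * τ) * stdNormalCDF ((Real.log (x / K) + (r + σ ^ 2 / 2) * τ) /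
          (σ * Real.sqrt τ) - σ * Real.sqrt τ))
      (stdNormalCDF ((Real.log (w / K) + (r + σ ^ 2 / 2) * τ) / (σ * Real.sqrt τ))) w := by
  have hq0 : 0 < Real.sqrt τ := Real.sqrt_pos.mpr hτ
  have hd1 := hasDerivAt_bs_d1 r σ K τ hσ hK hτ w hw
  have hA : HasDerivAt (fun x : ℝ => x * stdNormalCDF ((Real.log (x / K) + (r + σ ^ 2 / 2) * τ) /
      (σ * Real.sqrt τ))) _ w :=
    (hasDerivAt_id w).mul ((hasDerivAt_stdNormalCDF _).comp w hd1)
  have hB : HasDerivAt (fun x : ℝ => K * Real.exp (-r * τ) *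
      stdNormalCDF ((Real.log (x / K) + (r + σ ^ 2 / 2) * τ) / (σ * Real.sqrt τ)
        - σ * Real.sqrt τ)) _ w :=
    ((hasDerivAt_stdNormalCDF _).comp w (hd1.sub_const (σ * Real.sqrt τ))).const_mul
      (K * Real.exp (-r * τ))
  have h := hA.sub hB
  refine h.congr_deriv (Eq.symm ?_)
  simp only [id_eq]
  have key := bs_key r σ K τ w hσ hK hτ hw
  linear_combination (-(1 / (w * (σ * Real.sqrt τ)))) * key

lemma hasDerivAt_bs_time (r σ K T s t : ℝ) (hσ : 0 < σ) (hK : 0 < K) (hs : 0 < s)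
    (htT : t < T) :
    HasDerivAt (fun u => s * stdNormalCDF ((Real.log (s / K) + (r + σ ^ 2 / 2) * (T - u)) /
          (σ * Real.sqrt (T - u)))
        - K * Real.exp (-r * (T - u)) * stdNormalCDF ((Real.log (s / K) + (r + σ ^ 2 / 2) *
          (T - u)) / (σ * Real.sqrt (T - u)) - σ * Real.sqrt (T - u)))
      (-(s * (Real.exp (-((Real.log (s / K) + (r + σ ^ 2 / 2) * (T - t)) /
            (σ * Real.sqrt (T - t))) ^ 2 / 2) / Real.sqrt (2 * Real.pi)) * σ /
          (2 * Real.sqrt (T - t)))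
        - r * (K * Real.exp (-r * (T - t))) *
          stdNormalCDF ((Real.log (s / K) + (r + σ ^ 2 / 2) * (T - t)) /
            (σ * Real.sqrt (T - t)) - σ * Real.sqrt (T - t))) t := by
  have hτ : 0 < T - t := sub_pos.mpr htT
  have hq0 : 0 < Real.sqrt (T - t) := Real.sqrt_pos.mpr hτ
  have hu : HasDerivAt (fun u : ℝ => T - u) (-1) t := (hasDerivAt_id t).const_sub T
  have hsq : HasDerivAt (fun u => Real.sqrt (T - u)) (-1 / (2 * Real.sqrt (T - t))) t :=
    hu.sqrt hτ.ne'
  have hden : HasDerivAt (fun u => σ * Real.sqrt (T - u))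
      (σ * (-1 / (2 * Real.sqrt (T - t)))) t := hsq.const_mul σ
  have hnum : HasDerivAt (fun u => Real.log (s / K) + (r + σ ^ 2 / 2) * (T - u))
      ((r + σ ^ 2 / 2) * -1) t := (hu.const_mul (r + σ ^ 2 / 2)).const_add _
  obtain ⟨D1', hD1⟩ : ∃ d, HasDerivAt (fun u => (Real.log (s / K) + (r + σ ^ 2 / 2) * (T - u)) /
      (σ * Real.sqrt (T - u))) d t := ⟨_, hnum.div hden (by positivity)⟩
  have hexp : HasDerivAt (fun u => Real.exp (-r * (T - u)))
      (Real.exp (-r * (T - t)) * (-r * -1)) t := (hu.const_mul (-r)).exp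
  have hKe := hexp.const_mul K
  have hD2 := hD1.sub hden
  have h := (((hasDerivAt_stdNormalCDF _).comp t hD1).const_mul s).sub
    (hKe.mul ((hasDerivAt_stdNormalCDF _).comp t hD2))
  refine h.congr_deriv (Eq.symm ?_)
  simp only [Function.comp_apply]
  have key := bs_key r σ K (T - t) s hσ hK hτ hs
  linear_combination (-(D1' + σ / (2 * Real.sqrt (T - t)))) * key

/-- The Black–Scholes price satisfies the Black–Scholes PDE
`∂η/∂t + r s ∂η/∂s + ½σ²s²∂²η/∂s² = r η` on `(0,T) × (0,∞)`. -/
theorem black_scholes_pde (r σ K T : ℝ) (hr : 0 ≤ r) (hσ : 0 < σ) (hK : 0 < K) (hT : 0 < T)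
    (t s : ℝ) (ht0 : 0 < t) (htT : t < T) (hs : 0 < s) :
    ∃ a b c : ℝ,
      HasDerivAt (fun τ => bsPrice r σ K T τ s) a t ∧
      HasDerivAt (fun w => bsPrice r σ K T t w) b s ∧
      HasDerivAt (deriv (fun w => bsPrice r σ K T t w)) c s ∧
      a + r * s * b + (1 / 2) * σ ^ 2 * s ^ 2 * c = r * bsPrice r σ K T t s := by
  have hτ : 0 < T - t := sub_pos.mpr htT
  have hq0 : 0 < Real.sqrt (T - t) := Real.sqrt_pos.mpr hτ
  have hFeq : ∀ w : ℝ, 0 < w → bsPrice r σ K T t w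
      = w * stdNormalCDF ((Real.log (w / K) + (r + σ ^ 2 / 2) * (T - t)) /
          (σ * Real.sqrt (T - t)))
        - K * Real.exp (-r * (T - t)) * stdNormalCDF ((Real.log (w / K) + (r + σ ^ 2 / 2) *
          (T - t)) / (σ * Real.sqrt (T - t)) - σ * Real.sqrt (T - t)) := by
    intro w hw
    rw [bsPrice, if_neg (not_le.mpr hw), if_pos htT]
  have hGeq : ∀ u : ℝ, u < T → bsPrice r σ K T u s
      = s * stdNormalCDF ((Real.log (s / K) + (r + σ ^ 2 / 2) * (T - u)) /
          (σ * Real.sqrt (T - u)))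
        - K * Real.exp (-r * (T - u)) * stdNormalCDF ((Real.log (s / K) + (r + σ ^ 2 / 2) *
          (T - u)) / (σ * Real.sqrt (T - u)) - σ * Real.sqrt (T - u)) := by
    intro u hu
    rw [bsPrice, if_neg (not_le.mpr hs), if_pos hu]
  have hb : HasDerivAt (fun w => bsPrice r σ K T t w)
      (stdNormalCDF ((Real.log (s / K) + (r + σ ^ 2 / 2) * (T - t)) /
        (σ * Real.sqrt (T - t)))) s :=
    (hasDerivAt_bs_space r σ K (T - t) hσ hK hτ s hs).congr_of_eventuallyEq
      (Filter.eventuallyEq_of_mem (Ioi_mem_nhds hs) fun w hw => hFeq w hw)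
  have hder : deriv (fun w => bsPrice r σ K T t w) =ᶠ[nhds s]
      fun w => stdNormalCDF ((Real.log (w / K) + (r + σ ^ 2 / 2) * (T - t)) /
        (σ * Real.sqrt (T - t))) :=
    Filter.eventuallyEq_of_mem (Ioi_mem_nhds hs) fun w hw =>
      ((hasDerivAt_bs_space r σ K (T - t) hσ hK hτ w hw).congr_of_eventuallyEq
        (Filter.eventuallyEq_of_mem (Ioi_mem_nhds hw) fun v hv => hFeq v hv)).deriv
  have hc0 : HasDerivAt (fun w => stdNormalCDF ((Real.log (w / K) + (r + σ ^ 2 / 2) * (T - t)) /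
        (σ * Real.sqrt (T - t))))
      (Real.exp (-((Real.log (s / K) + (r + σ ^ 2 / 2) * (T - t)) /
          (σ * Real.sqrt (T - t))) ^ 2 / 2) / Real.sqrt (2 * Real.pi) *
        (1 / (s * (σ * Real.sqrt (T - t))))) s :=
    (hasDerivAt_stdNormalCDF _).comp s (hasDerivAt_bs_d1 r σ K (T - t) hσ hK hτ s hs)
  have hc := hc0.congr_of_eventuallyEq hder
  have ha := (hasDerivAt_bs_time r σ K T s t hσ hK hs htT).congr_of_eventuallyEq
    (Filter.eventuallyEq_of_mem (Iio_mem_nhds htT) fun u hu => hGeq u hu)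
  refine ⟨_, _, _, ha, hb, hc, ?_⟩
  rw [hGeq t htT]
  field_simp
  ring
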